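/- Let V be a nonempty finite set, f : 2^V → ℝ a submodular set function with f(∅) = 0, and α ≤ α' real numbers. If P is a minimizer of f_α[·] over all partitions of V that refines every minimizer of f_α[·] (the finest minimizer), and P' is likewise the finest minimizer of f_{α'}[·], then P refines P' (P ≼ P'). In particular, the finest minimizers {Q_α} over all α form a chain in the partition lattice of V, ordered by refinement, which gets coarser as α increases. -/

import Mathlib

open Finset

variable {α : Type*}

/-- The residual function `f_α(X) = f(X) - f(V) + α` for nonempty `X`, and `0` on `∅`. -/
noncomputable def resFn [DecidableEq α] (f : Finset α → ℝ) (V : Finset α) (a : ℝ)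
    (X : Finset α) : ℝ :=
  if X = ∅ then 0 else f X - f V + a

/-- The partition sum `f_α[P] = Σ_{C ∈ P} f_α(C)`. -/
noncomputable def partSum [DecidableEq α] (f : Finset α → ℝ) (V : Finset α) (a : ℝ)
    {X : Finset α} (P : Finpartition X) : ℝ :=
  ∑ C ∈ P.parts, resFn f V a C

/-- The Dilworth truncation `f̂_α(X) = min over partitions P of X of f_α[P]`. -/
noncomputable def dilworth [DecidableEq α] (f : Finset α → ℝ) (V : Finset α) (a : ℝ)
    (X : Finset α) : ℝ :=
  sInf {y : ℝ | ∃ P : Finpartition X, partSum f V a P = y}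

/-- `P` refines `P'`: every block of `P` is contained in some block of `P'`. -/
def refines [DecidableEq α] {V : Finset α} (P P' : Finpartition V) : Prop :=
  ∀ C ∈ P.parts, ∃ C' ∈ P'.parts, C ⊆ C'

lemma resFn_of_nonempty [DecidableEq α] (f : Finset α → ℝ) (V : Finset α) (a : ℝ)
    {X : Finset α} (hX : X.Nonempty) : resFn f V a X = f X - f V + a := by
  rw [resFn, if_neg hX.ne_empty]

/-- Telescoping submodularity: uncrossing a set `C` against a disjoint family. -/
lemma telescope_submodular [DecidableEq α] {V : Finset α} {f : Finset α → ℝ}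
    (hsub : ∀ X Y : Finset α, X ⊆ V → Y ⊆ V → f (X ∪ Y) + f (X ∩ Y) ≤ f X + f Y)
    {C : Finset α} (hC : C ⊆ V) (M : Finset (Finset α)) (hMV : ∀ B ∈ M, B ⊆ V)
    (hdisj : (M : Set (Finset α)).PairwiseDisjoint id) :
    f (C ∪ M.sup id) + ∑ B ∈ M, f (C ∩ B) ≤ f C + ∑ B ∈ M, f B := by
  induction M using Finset.induction_on with
  | empty => simp
  | @insert B M hBM ih =>
    have hMV' : ∀ B' ∈ M, B' ⊆ V := fun B' h => hMV B' (mem_insert_of_mem h)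
    have hdisj' : (M : Set (Finset α)).PairwiseDisjoint id :=
      hdisj.subset (fun x hx => by simp only [coe_insert, Set.mem_insert_iff]; exact Or.inr hx)
    have ih' := ih hMV' hdisj'
    have hBsup : Disjoint B (M.sup id) := by
      rw [Finset.disjoint_sup_right]
      intro B' hB'
      exact hdisj (mem_insert_self _ _) (mem_insert_of_mem hB') (fun h => hBM (h ▸ hB'))
    have hsupV : M.sup id ⊆ V := by
      intro x hx
      rw [Finset.mem_sup] at hx
      obtain ⟨B', hB', hxB'⟩ := hx
      exact hMV' B' hB' hxB'
    have hkey := hsub (C ∪ M.sup id) B (union_subset hC hsupV) (hMV B (mem_insert_self _ _))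
    have hint : (C ∪ M.sup id) ∩ B = C ∩ B := by
      have h0 : M.sup id ∩ B = ∅ := by
        rw [← Finset.disjoint_iff_inter_eq_empty]
        exact hBsup.symm
      rw [union_inter_distrib_right, h0, union_empty]
    rw [hint] at hkey
    have hun : (C ∪ M.sup id) ∪ B = C ∪ (insert B M).sup id := by
      simp only [Finset.sup_insert, id_eq, sup_eq_union]
      rw [union_assoc, union_comm (M.sup id) B]
    rw [hun] at hkey
    rw [sum_insert hBM, sum_insert hBM]
    linarith

/-- Merging the parts of `P'` that meet `C` cannot decrease the partition sum,
if `P'` is a minimizer. -/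
lemma merge_bound [DecidableEq α] {V : Finset α} (f : Finset α → ℝ) (a' : ℝ)
    (P' : Finpartition V) {C : Finset α} (hC : C ⊆ V) (hCne : C.Nonempty)
    (hmin : ∀ Q : Finpartition V, partSum f V a' P' ≤ partSum f V a' Q) :
    ∑ B ∈ P'.parts.filter (fun B => (C ∩ B).Nonempty), resFn f V a' B
      ≤ resFn f V a' ((P'.parts.filter (fun B => (C ∩ B).Nonempty)).sup id) := by
  set M := P'.parts.filter (fun B => (C ∩ B).Nonempty) with hM
  set W := M.sup id with hW
  have hMsub : M ⊆ P'.parts := filter_subset _ _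
  have hCW : C ⊆ W := by
    intro x hx
    obtain ⟨B, hB, hxB⟩ := P'.exists_mem (hC hx)
    have hBM : B ∈ M := mem_filter.2 ⟨hB, ⟨x, mem_inter.2 ⟨hx, hxB⟩⟩⟩
    exact Finset.mem_sup.2 ⟨B, hBM, hxB⟩
  have hWne : W.Nonempty := hCne.mono hCW
  have hWnotin : W ∉ P'.parts \ M := by
    intro h
    rw [mem_sdiff] at h
    have : (C ∩ W).Nonempty := by
      rwa [inter_eq_left.2 hCW]
    exact h.2 (mem_filter.2 ⟨h.1, this⟩)
  -- the merged partition
  have hdisjWB : ∀ B ∈ P'.parts \ M, Disjoint W B := by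
    intro B hB
    rw [mem_sdiff] at hB
    rw [hW, Finset.disjoint_sup_left]
    intro B' hB'
    refine P'.disjoint (hMsub hB') hB.1 ?_
    rintro rfl
    exact hB.2 hB'
  let T : Finpartition V := {
    parts := insert W (P'.parts \ M)
    supIndep := by
      rw [Finset.supIndep_iff_pairwiseDisjoint]
      intro x hx y hy hxy
      simp only [coe_insert, Set.mem_insert_iff, mem_coe] at hx hy
      rcases hx with rfl | hx
      · rcases hy with rfl | hy
        · exact absurd rfl hxy
        · exact hdisjWB y hy
      · rcases hy with rfl | hy
        · exact (hdisjWB x hx).symm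
        · exact P'.disjoint (mem_sdiff.1 hx).1 (mem_sdiff.1 hy).1 hxy
    sup_parts := by
      rw [Finset.sup_insert]
      have : (id W : Finset α) ⊔ (P'.parts \ M).sup id = (M ∪ (P'.parts \ M)).sup id := by
        rw [Finset.sup_union]; rfl
      rw [this, union_sdiff_of_subset hMsub, P'.sup_parts]
    bot_notMem := by
      rw [mem_insert]
      push_neg
      constructor
      · exact fun h => hWne.ne_empty h.symm
      · intro h
        exact P'.bot_notMem (mem_sdiff.1 h).1 }
  have hT := hmin T
  have hTsum : partSum f V a' T = resFn f V a' W + ∑ B ∈ P'.parts \ M, resFn f V a' B := by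
    rw [partSum]
    exact sum_insert hWnotin
  have hPsum : partSum f V a' P' = ∑ B ∈ P'.parts \ M, resFn f V a' B
      + ∑ B ∈ M, resFn f V a' B := by
    rw [partSum, ← sum_sdiff hMsub]
  rw [hTsum, hPsum] at hT
  linarith

/-- Per-block key inequality: refining a block `C` by the minimizer `P'` does not
increase the residual value at level `a'`. -/
lemma perblock_bound [DecidableEq α] {V : Finset α} (f : Finset α → ℝ) (a' : ℝ)
    (hsub : ∀ X Y : Finset α, X ⊆ V → Y ⊆ V → f (X ∪ Y) + f (X ∩ Y) ≤ f X + f Y)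
    (P' : Finpartition V) {C : Finset α} (hC : C ⊆ V) (hCne : C.Nonempty)
    (hmin : ∀ Q : Finpartition V, partSum f V a' P' ≤ partSum f V a' Q) :
    ∑ B ∈ P'.parts.filter (fun B => (C ∩ B).Nonempty), resFn f V a' (C ∩ B)
      ≤ resFn f V a' C := by
  set M := P'.parts.filter (fun B => (C ∩ B).Nonempty) with hM
  set W := M.sup id with hW
  have hMsub : M ⊆ P'.parts := filter_subset _ _
  have hMV : ∀ B ∈ M, B ⊆ V := fun B h => P'.le (hMsub h)
  have hdisj : (M : Set (Finset α)).PairwiseDisjoint id :=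
    P'.disjoint.subset (by exact_mod_cast hMsub)
  have hCW : C ⊆ W := by
    intro x hx
    obtain ⟨B, hB, hxB⟩ := P'.exists_mem (hC hx)
    have hBM : B ∈ M := mem_filter.2 ⟨hB, ⟨x, mem_inter.2 ⟨hx, hxB⟩⟩⟩
    exact Finset.mem_sup.2 ⟨B, hBM, hxB⟩
  have htel := telescope_submodular hsub hC M hMV hdisj
  rw [← hW, union_eq_right.2 hCW] at htel
  have hmerge := merge_bound f a' P' hC hCne hmin
  rw [← hM, ← hW] at hmerge
  have hWne : W.Nonempty := hCne.mono hCW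
  have e1 : ∑ B ∈ M, resFn f V a' (C ∩ B)
      = (∑ B ∈ M, f (C ∩ B)) - M.card * (f V - a') := by
    rw [Finset.sum_congr rfl (fun B hB => resFn_of_nonempty f V a' ((mem_filter.1 hB).2))]
    rw [Finset.sum_add_distrib, Finset.sum_sub_distrib, Finset.sum_const, Finset.sum_const,
      nsmul_eq_mul, nsmul_eq_mul]
    ring
  have e2 : ∑ B ∈ M, resFn f V a' B = (∑ B ∈ M, f B) - M.card * (f V - a') := by
    rw [Finset.sum_congr rfl
      (fun B hB => resFn_of_nonempty f V a' (P'.nonempty_of_mem_parts (hMsub hB)))]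
    rw [Finset.sum_add_distrib, Finset.sum_sub_distrib, Finset.sum_const, Finset.sum_const,
      nsmul_eq_mul, nsmul_eq_mul]
    ring
  rw [e2, resFn_of_nonempty f V a' hWne] at hmerge
  rw [e1, resFn_of_nonempty f V a' hCne]
  have hMne : (0:ℝ) < M.card := by
    have : M.Nonempty := by
      obtain ⟨x, hx⟩ := hCne
      obtain ⟨B, hB, hxB⟩ := P'.exists_mem (hC hx)
      exact ⟨B, mem_filter.2 ⟨hB, ⟨x, mem_inter.2 ⟨hx, hxB⟩⟩⟩⟩
    exact_mod_cast card_pos.2 this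
  linarith

/-- The finest minimizers of `f_α[·]` form a chain in the partition lattice,
getting coarser as `α` increases (equation (4), the PSP, of the paper). -/
theorem finest_minimizers_chain [DecidableEq α] (V : Finset α) (hV : V.Nonempty)
    (f : Finset α → ℝ) (hf : f ∅ = 0)
    (hsub : ∀ X Y : Finset α, X ⊆ V → Y ⊆ V → f (X ∪ Y) + f (X ∩ Y) ≤ f X + f Y)
    (a a' : ℝ) (haa' : a ≤ a') (P P' : Finpartition V)
    (hPmin : ∀ Q : Finpartition V, partSum f V a P ≤ partSum f V a Q)
    (hPfinest : ∀ Q : Finpartition V,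
      (∀ R : Finpartition V, partSum f V a Q ≤ partSum f V a R) → refines P Q)
    (hP'min : ∀ Q : Finpartition V, partSum f V a' P' ≤ partSum f V a' Q)
    (hP'finest : ∀ Q : Finpartition V,
      (∀ R : Finpartition V, partSum f V a' Q ≤ partSum f V a' R) → refines P' Q) :
    refines P P' := by
  classical
  set Q : Finpartition V := P ⊓ P' with hQ
  have himg : Q.parts = ((P.parts ×ˢ P'.parts).filter fun bc => (bc.1 ∩ bc.2).Nonempty).image
      (fun bc => bc.1 ∩ bc.2) := by
    rw [hQ, Finpartition.parts_inf]
    ext X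
    simp only [mem_erase, mem_image, mem_filter, mem_product, bot_eq_empty, ne_eq,
      inf_eq_inter]
    constructor
    · rintro ⟨hXne, ⟨⟨c, b⟩, hcb, rfl⟩⟩
      exact ⟨(c, b), ⟨hcb, nonempty_iff_ne_empty.2 hXne⟩, rfl⟩
    · rintro ⟨⟨c, b⟩, ⟨hcb, hne⟩, rfl⟩
      exact ⟨nonempty_iff_ne_empty.1 hne, ⟨(c, b), hcb, rfl⟩⟩
  have hinj : ∀ x ∈ (P.parts ×ˢ P'.parts).filter (fun bc => (bc.1 ∩ bc.2).Nonempty),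
      ∀ y ∈ (P.parts ×ˢ P'.parts).filter (fun bc => (bc.1 ∩ bc.2).Nonempty),
      x.1 ∩ x.2 = y.1 ∩ y.2 → x = y := by
    rintro ⟨c1, b1⟩ hx ⟨c2, b2⟩ hy h
    rw [mem_filter, mem_product] at hx hy
    obtain ⟨z, hz⟩ := hx.2
    have hz2 : z ∈ c2 ∩ b2 := h ▸ hz
    rw [mem_inter] at hz hz2
    have hc : c1 = c2 := P.eq_of_mem_parts hx.1.1 hy.1.1 hz.1 hz2.1
    have hb : b1 = b2 := P'.eq_of_mem_parts hx.1.2 hy.1.2 hz.2 hz2.2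
    rw [Prod.mk.injEq]
    exact ⟨hc, hb⟩
  have hdouble : ∀ (r : ℝ), partSum f V r Q = ∑ C ∈ P.parts,
      ∑ B ∈ P'.parts.filter (fun B => (C ∩ B).Nonempty), resFn f V r (C ∩ B) := by
    intro r
    rw [partSum, himg, Finset.sum_image hinj, Finset.sum_filter, Finset.sum_product]
    exact Finset.sum_congr rfl fun C _ => (Finset.sum_filter _ _).symm
  have hQP : partSum f V a Q ≤ partSum f V a P := by
    rw [hdouble a, partSum]
    refine Finset.sum_le_sum fun C hC => ?_
    have hCV : C ⊆ V := P.le hC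
    have hCne := P.nonempty_of_mem_parts hC
    have hkey' := perblock_bound f a' hsub P' hCV hCne hP'min
    set M := P'.parts.filter (fun B => (C ∩ B).Nonempty) with hM
    have e1 : ∑ B ∈ M, resFn f V a (C ∩ B)
        = (∑ B ∈ M, resFn f V a' (C ∩ B)) + M.card * (a - a') := by
      have h : ∀ B ∈ M, resFn f V a (C ∩ B) = resFn f V a' (C ∩ B) + (a - a') := by
        intro B hB
        rw [resFn_of_nonempty f V a (mem_filter.1 hB).2,
            resFn_of_nonempty f V a' (mem_filter.1 hB).2]
        ring
      rw [Finset.sum_congr rfl h, Finset.sum_add_distrib, Finset.sum_const, nsmul_eq_mul]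
    obtain ⟨x, hx⟩ := hCne
    obtain ⟨B0, hB0, hxB0⟩ := P'.exists_mem (hCV hx)
    have hMne : M.Nonempty := ⟨B0, mem_filter.2 ⟨hB0, ⟨x, mem_inter.2 ⟨hx, hxB0⟩⟩⟩⟩
    have hcard1 : (1:ℝ) ≤ (M.card : ℝ) := by exact_mod_cast card_pos.2 hMne
    have hmul : (M.card : ℝ) * (a - a') ≤ 1 * (a - a') :=
      mul_le_mul_of_nonpos_right hcard1 (by linarith)
    have hCne' : C.Nonempty := ⟨x, hx⟩
    rw [resFn_of_nonempty f V a hCne']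
    rw [resFn_of_nonempty f V a' hCne'] at hkey'
    rw [e1]
    linarith
  have hQmin : ∀ R : Finpartition V, partSum f V a Q ≤ partSum f V a R :=
    fun R => hQP.trans (hPmin R)
  have hPQ : refines P Q := hPfinest Q hQmin
  intro C hC
  obtain ⟨D, hD, hCD⟩ := hPQ C hC
  have hQle : Q ≤ P' := inf_le_right
  obtain ⟨B, hB, hDB⟩ := hQle hD
  exact ⟨B, hB, hCD.trans (Finset.le_iff_subset.mp hDB)⟩
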